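/- arXiv:2209.15102 — 6 statements merged into one kernel-verified Lean document; each statement's English description precedes it below -/
import Mathlib

section
/- Gordan's Lemma: Let L ⊂ R^d be a full-rank lattice (a free Z-submodule of rank d) and let C ⊂ R^d be a polyhedral cone generated by finitely many lattice vectors u₁,...,u_k ∈ L. Then the semigroup S = (L ∩ C) \ {0} under addition is finitely generated; specifically, the finite set (L ∩ H) where H = {Σ a_i u_i : a_i ∈ [0,1]} generates S. -/
private lemma list_sum_fin {M : Type*} [AddCommMonoid M] (l : List M) :
    ∑ j : Fin l.length, l.get j = l.sum := by
  rw [Fin.sum_univ_def, List.map_get_finRange]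

/-- Gordan's Lemma: for a discrete full-rank lattice `L ⊆ ℝ^d` and a polyhedral
cone `C` generated by lattice vectors `u₁,...,u_k`, the set `L ∩ H` (where `H`
is the set of `[0,1]`-combinations of the `uᵢ`) is finite, and every nonzero
element of `L ∩ C` is a finite sum of nonzero elements of `L ∩ H`; hence the
semigroup `(L ∩ C) \ {0}` is finitely generated. -/
theorem gordan (d k : ℕ) (L : Submodule ℤ (Fin d → ℝ))
    (bL : Module.Basis (Fin d) ℤ L) (hdisc : DiscreteTopology L)
    (u : Fin k → (Fin d → ℝ)) (hu : ∀ i, u i ∈ L)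
    (C H : Set (Fin d → ℝ))
    (hC : C = {x | ∃ b : Fin k → ℝ, (∀ i, 0 ≤ b i) ∧ x = ∑ i, b i • u i})
    (hH : H = {x | ∃ a : Fin k → ℝ, (∀ i, a i ∈ Set.Icc (0:ℝ) 1) ∧ x = ∑ i, a i • u i}) :
    ({x | x ∈ L} ∩ H).Finite ∧
    ∀ x ∈ L, x ∈ C → x ≠ 0 →
      ∃ n : ℕ, ∃ f : Fin n → (Fin d → ℝ),
        (∀ j, f j ∈ L ∧ f j ∈ H ∧ f j ≠ 0) ∧ x = ∑ j, f j := by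
  -- every `u i` is in `H`
  have huH : ∀ i, u i ∈ H := by
    intro i
    rw [hH]
    refine ⟨fun j => if j = i then 1 else 0, fun j => ?_, ?_⟩
    · by_cases h : j = i <;> simp [h]
    · simp [ite_smul, Finset.sum_ite_eq']
  constructor
  · -- finiteness: `H` is bounded, `L` is closed and discrete
    have hLdisc : DiscreteTopology (↑L : Set (Fin d → ℝ)) := hdisc
    have hLclosed : IsClosed (↑L : Set (Fin d → ℝ)) := by
      have : DiscreteTopology L.toAddSubgroup := hdisc
      exact AddSubgroup.isClosed_of_discrete (H := L.toAddSubgroup)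
    have hHb : Bornology.IsBounded H := by
      have hcomp : IsCompact ((fun a : Fin k → ℝ => ∑ i, a i • u i) ''
          Set.Icc (0 : Fin k → ℝ) 1) := by
        refine (isCompact_Icc).image ?_
        exact continuous_finset_sum _ fun i _ => (continuous_apply i).smul continuous_const
      refine hcomp.isBounded.subset ?_
      rw [hH]
      rintro x ⟨a, ha, rfl⟩
      exact ⟨a, ⟨fun i => (ha i).1, fun i => (ha i).2⟩, rfl⟩
    have := Metric.finite_isBounded_inter_isClosed (K := H) (s := (↑L : Set (Fin d → ℝ)))
      (isDiscrete_iff_discreteTopology.2 hLdisc) hHb hLclosed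
    exact (this.subset (by intro x hx; exact ⟨hx.2, hx.1⟩))
  · intro x hxL hxC hx0
    rw [hC] at hxC
    obtain ⟨b, hb, hxb⟩ := hxC
    set m : Fin k → ℕ := fun i => (⌊b i⌋).toNat with hm
    have hmcast : ∀ i, (m i : ℝ) = ⌊b i⌋ := by
      intro i
      have h := Int.toNat_of_nonneg (Int.floor_nonneg.2 (hb i))
      exact_mod_cast congrArg (Int.cast : ℤ → ℝ) h
    set a : Fin k → ℝ := fun i => Int.fract (b i) with ha
    have hba : ∀ i, b i = a i + (m i : ℝ) := by
      intro i
      rw [hmcast i, ha]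
      exact (Int.fract_add_floor (b i)).symm
    set y : Fin d → ℝ := ∑ i, a i • u i with hy
    have hyH : y ∈ H := by
      rw [hH]
      exact ⟨a, fun i => ⟨Int.fract_nonneg _, (Int.fract_lt_one _).le⟩, rfl⟩
    have hsumL : ∑ i, (m i : ℝ) • u i ∈ L := by
      refine Submodule.sum_mem _ fun i _ => ?_
      have : ((m i : ℤ) : ℝ) • u i = (m i : ℤ) • u i := Int.cast_smul_eq_zsmul ℝ _ _
      rw [show ((m i : ℝ)) = ((m i : ℤ) : ℝ) by push_cast; ring, this]
      exact Submodule.smul_mem _ _ (hu i)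
    have hsum : x = y + ∑ i, (m i : ℝ) • u i := by
      rw [hxb, hy, ← Finset.sum_add_distrib]
      exact Finset.sum_congr rfl fun i _ => by rw [← add_smul, ← hba i]
    have hyL : y ∈ L := by
      have : y = x - ∑ i, (m i : ℝ) • u i := eq_sub_of_add_eq hsum.symm
      rw [this]
      exact Submodule.sub_mem _ hxL hsumL
    -- build the list of generators
    set ℓ : List (Fin d → ℝ) :=
      (if y = 0 then [] else [y]) ++
        (List.finRange k).flatMap
          (fun i => if u i = 0 then [] else List.replicate (m i) (u i)) with hℓ
    have hmem : ∀ v ∈ ℓ, v ∈ L ∧ v ∈ H ∧ v ≠ 0 := by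
      intro v hv
      rw [hℓ, List.mem_append] at hv
      rcases hv with hv | hv
      · by_cases h : y = 0
        · simp [h] at hv
        · simp only [h, if_false, List.mem_singleton] at hv
          subst hv
          exact ⟨hyL, hyH, h⟩
      · rw [List.mem_flatMap] at hv
        obtain ⟨i, -, hvi⟩ := hv
        by_cases h : u i = 0
        · simp [h] at hvi
        · rw [if_neg h] at hvi
          rw [List.eq_of_mem_replicate hvi]
          exact ⟨hu i, huH i, h⟩
    have hsum' : ℓ.sum = x := by
      rw [hℓ, List.sum_append]
      have h1 : (if y = 0 then ([] : List (Fin d → ℝ)) else [y]).sum = y := by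
        by_cases h : y = 0 <;> simp [h]
      have h2 : ((List.finRange k).flatMap
          (fun i => if u i = 0 then [] else List.replicate (m i) (u i))).sum
          = ∑ i, (m i : ℝ) • u i := by
        rw [List.flatMap, List.sum_flatten, List.map_map, Fin.sum_univ_def]
        congr 1
        refine List.map_congr_left fun i _ => ?_
        by_cases h : u i = 0
        · simp [h, Function.comp]
        · simp only [Function.comp, h, if_false, List.sum_replicate]
          rw [Nat.cast_smul_eq_nsmul]
      rw [h1, h2, ← hsum]
    refine ⟨ℓ.length, ℓ.get, fun j => hmem _ (ℓ.get_mem _), ?_⟩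
    rw [list_sum_fin, hsum']
end

section
/- Let λ be a Perron number of degree d. Then there exists a rational polyhedral convex cone KR_λ in V_λ = Q(λ) ⊗ R generated by finitely many elements of the ring of integers O_λ, such that λ·K_λ ⊆ KR_λ ⊆ K_λ, where K_λ is the invariant eigencone of the multiplication-by-λ action. -/
open Finset

set_option linter.unnecessarySeqFocus false
set_option linter.deprecated false

private lemma cube_lemma {d : ℕ} (r : ℝ) (hr : 0 < r) (p : Fin d → ℝ) (s : Finset (Fin d)) :
    ∀ t : (Fin d → Bool) → (Fin d → ℝ),
      (∀ i ∈ s, |p i| ≤ r) →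
      (∀ σ, ∀ i ∈ s, (σ i = true → r ≤ t σ i) ∧ (σ i = false → t σ i ≤ -r)) →
      (∀ σ, ∀ i, i ∉ s → t σ i = p i) →
      ∃ lam : (Fin d → Bool) → ℝ, (∀ σ, 0 ≤ lam σ) ∧ ∑ σ, lam σ • t σ = p := by
  induction s using Finset.induction_on with
  | empty =>
    intro t _ _ hout
    have htp : ∀ σ, t σ = p := fun σ => funext fun i => hout σ i (by simp)
    refine ⟨fun σ => if σ = (fun _ => true) then 1 else 0, fun σ => by dsimp only; split <;> norm_num, ?_⟩
    simp [htp, ite_smul]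
  | @insert j s' hj ih =>
    intro t hp ht hout
    set tp : (Fin d → Bool) → (Fin d → ℝ) := fun σ => t (Function.update σ j true) with htpdef
    set tm : (Fin d → Bool) → (Fin d → ℝ) := fun σ => t (Function.update σ j false) with htmdef
    have hpj : |p j| ≤ r := hp j (mem_insert_self _ _)
    have htpj : ∀ σ, r ≤ tp σ j := fun σ =>
      (ht (Function.update σ j true) j (mem_insert_self _ _)).1 (by simp)
    have htmj : ∀ σ, tm σ j ≤ -r := fun σ =>
      (ht (Function.update σ j false) j (mem_insert_self _ _)).2 (by simp)
    set θ : (Fin d → Bool) → ℝ := fun σ => (p j - tm σ j) / (tp σ j - tm σ j) with hθdef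
    have hden : ∀ σ, 0 < tp σ j - tm σ j := fun σ => by
      have h1 := htpj σ; have h2 := htmj σ
      have := abs_le.1 hpj
      linarith
    have hθ0 : ∀ σ, 0 ≤ θ σ := fun σ => by
      have h2 := htmj σ; have := abs_le.1 hpj
      apply div_nonneg _ (le_of_lt (hden σ)); linarith
    have hθ1 : ∀ σ, θ σ ≤ 1 := fun σ => by
      have h1 := htpj σ; have := abs_le.1 hpj
      rw [div_le_one (hden σ)]; linarith
    set t' : (Fin d → Bool) → (Fin d → ℝ) := fun σ => θ σ • tp σ + (1 - θ σ) • tm σ with ht'def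
    have happly : ∀ σ i, t' σ i = θ σ * tp σ i + (1 - θ σ) * tm σ i := fun σ i => rfl
    have hijne : ∀ i ∈ s', i ≠ j := fun i hi => fun h => hj (h ▸ hi)
    obtain ⟨lam', hlam'0, hlam'sum⟩ := ih t'
      (fun i hi => hp i (mem_insert_of_mem hi))
      (by
        intro σ i hi
        have hne : i ≠ j := hijne i hi
        have h1 := ht (Function.update σ j true) i (mem_insert_of_mem hi)
        have h2 := ht (Function.update σ j false) i (mem_insert_of_mem hi)
        rw [Function.update_of_ne hne] at h1 h2
        constructor
        · intro hσ
          have a1 := h1.1 hσ; have a2 := h2.1 hσ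
          have b0 := hθ0 σ; have b1 := hθ1 σ
          rw [happly]; nlinarith
        · intro hσ
          have a1 := h1.2 hσ; have a2 := h2.2 hσ
          have b0 := hθ0 σ; have b1 := hθ1 σ
          rw [happly]; nlinarith)
      (by
        intro σ i hi
        by_cases hij : i = j
        · subst hij
          rw [happly]
          have := hden σ
          have hθeq : θ σ * (tp σ i - tm σ i) = p i - tm σ i := div_mul_cancel₀ _ (hden σ).ne'
          linear_combination hθeq
        · have hi' : i ∉ insert j s' := by
            simp only [mem_insert]; push_neg; exact ⟨hij, hi⟩
          have e1 : tp σ i = p i := hout _ i hi'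
          have e2 : tm σ i = p i := hout _ i hi'
          rw [happly, e1, e2]; ring)
    refine ⟨fun τ => ∑ σ, lam' σ *
        ((if τ = Function.update σ j true then θ σ else 0) +
         (if τ = Function.update σ j false then 1 - θ σ else 0)), ?_, ?_⟩
    · intro τ
      apply Finset.sum_nonneg
      intro σ _
      have := hθ0 σ; have := hθ1 σ; have := hlam'0 σ
      have h1 : (0:ℝ) ≤ (if τ = Function.update σ j true then θ σ else 0) := by positivity
      have h2 : (0:ℝ) ≤ (if τ = Function.update σ j false then 1 - θ σ else 0) := by
        split <;> linarith
      nlinarith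
    · rw [← hlam'sum]
      have key : ∀ τ : Fin d → Bool,
          (∑ σ, lam' σ *
            ((if τ = Function.update σ j true then θ σ else 0) +
             (if τ = Function.update σ j false then 1 - θ σ else 0))) • t τ
          = ∑ σ, ((lam' σ * θ σ) • (if τ = Function.update σ j true then t τ else 0)
              + (lam' σ * (1 - θ σ)) • (if τ = Function.update σ j false then t τ else 0)) := by
        intro τ
        rw [Finset.sum_smul]
        apply Finset.sum_congr rfl
        intro σ _
        split <;> split <;> simp <;> ring_nf <;> module
      rw [Finset.sum_congr rfl (fun τ _ => key τ)]
      rw [Finset.sum_comm]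
      apply Finset.sum_congr rfl
      intro σ _
      rw [Finset.sum_add_distrib]
      have hupd_ne : Function.update σ j true ≠ Function.update σ j false := by
        intro h
        have := congrFun h j
        simp at this
      have e1 : ∑ τ : Fin d → Bool, (lam' σ * θ σ) • (if τ = Function.update σ j true then t τ else 0)
          = (lam' σ * θ σ) • tp σ := by
        rw [← Finset.smul_sum]
        congr 1
        rw [Finset.sum_ite_eq' Finset.univ (Function.update σ j true) t]
        simp [htpdef]
      have e2 : ∑ τ : Fin d → Bool, (lam' σ * (1 - θ σ)) • (if τ = Function.update σ j false then t τ else 0)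
          = (lam' σ * (1 - θ σ)) • tm σ := by
        rw [← Finset.smul_sum]
        congr 1
        rw [Finset.sum_ite_eq' Finset.univ (Function.update σ j false) t]
        simp [htmdef]
      rw [e1, e2, ht'def]
      simp only [smul_add, mul_smul]


/-- Existence of a rational polyhedral cone. With the multiplication-by-λ
action of a Perron number modeled by the companion matrix `C` on `ℝ^d` (with
Perron eigenbasis `v`, eigenvalues `μ`), and `L` the lattice `𝓞_λ` whose set
of rays is dense (`P(𝓞_λ)` dense in `P(V_λ)`), there is a polyhedral cone `KR`
generated by finitely many lattice vectors with `λ·K_λ ⊆ KR ⊆ K_λ`. -/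
theorem rational_cone (d : ℕ) [NeZero d] (C : Matrix (Fin d) (Fin d) ℝ)
    (μ : Fin d → ℝ) (v : Fin d → (Fin d → ℝ))
    (hbasis : LinearIndependent ℝ v)
    (hspan : Submodule.span ℝ (Set.range v) = ⊤)
    (heig : ∀ i, C.mulVec (v i) = μ i • v i)
    (hPerron : ∀ i, i ≠ 0 → μ 0 > |μ i|) (hpos : 0 < μ 0)
    (L : Submodule ℤ (Fin d → ℝ))
    (hdense : Dense {x : Fin d → ℝ | ∃ c : ℝ, 0 < c ∧ c • x ∈ L})
    (Kcone : Set (Fin d → ℝ))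
    (hK : Kcone = {x | ∃ a : Fin d → ℝ, x = ∑ i, a i • v i ∧ 0 < a 0 ∧
      ∀ i, i ≠ 0 → |a i| < a 0}) :
    ∃ k : ℕ, ∃ u : Fin k → (Fin d → ℝ), (∀ i, u i ∈ L) ∧
      (∀ x ∈ Kcone, C.mulVec x ∈
        {y | ∃ b : Fin k → ℝ, (∀ i, 0 ≤ b i) ∧ y = ∑ i, b i • u i}) ∧
      (∀ y, (∃ b : Fin k → ℝ, (∀ i, 0 ≤ b i) ∧ y = ∑ i, b i • u i) →
        y ≠ 0 → y ∈ Kcone) := by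
  -- the basis
  set B : Module.Basis (Fin d) ℝ (Fin d → ℝ) := Module.Basis.mk hbasis hspan.ge with hBdef
  have hBv : ∀ i, B i = v i := fun i => Module.Basis.mk_apply hbasis hspan.ge i
  set coord : (Fin d → ℝ) →ₗ[ℝ] (Fin d → ℝ) := (B.equivFun : (Fin d → ℝ) ≃ₗ[ℝ] (Fin d → ℝ)).toLinearMap with hcoorddef
  have coord_sum : ∀ w : Fin d → ℝ, coord (∑ i, w i • v i) = w := by
    intro w
    have : ∑ i, w i • v i = B.equivFun.symm w := by
      rw [Module.Basis.equivFun_symm_apply]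
      exact Finset.sum_congr rfl fun i _ => by rw [hBv]
    rw [this]
    exact B.equivFun.apply_symm_apply w
  have sum_coord : ∀ x : Fin d → ℝ, ∑ i, coord x i • v i = x := by
    intro x
    have h2 : ∀ y (i : Fin d), coord y i = B.equivFun y i := fun _ _ => rfl
    conv_rhs => rw [← B.sum_equivFun x]
    exact Finset.sum_congr rfl fun i _ => by rw [hBv, h2]
  have coord_cont : ∀ i, Continuous (fun x => coord x i) := by
    intro i
    have : Continuous coord := coord.continuous_of_finiteDimensional
    exact (continuous_apply i).comp this
  -- membership characterization
  have hKmem : ∀ x, x ∈ Kcone ↔ (0 < coord x 0 ∧ ∀ i, i ≠ 0 → |coord x i| < coord x 0) := by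
    intro x
    rw [hK]
    constructor
    · rintro ⟨a, rfl, ha0, hai⟩
      rw [coord_sum]
      exact ⟨ha0, hai⟩
    · rintro ⟨h0, hi⟩
      exact ⟨coord x, (sum_coord x).symm, h0, hi⟩
  -- the ratio bound
  have hne : (Finset.univ : Finset (Fin d)).Nonempty := Finset.univ_nonempty
  set r₀ : ℝ := Finset.univ.sup' hne (fun i => if i = 0 then 0 else |μ i| / μ 0) with hr₀def
  have hr₀0 : 0 ≤ r₀ := by
    have h := Finset.le_sup' (fun i => if i = 0 then (0:ℝ) else |μ i| / μ 0) (Finset.mem_univ (0 : Fin d))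
    rw [if_pos rfl] at h
    exact h
  have hr₀1 : r₀ < 1 := by
    rw [hr₀def, Finset.sup'_lt_iff]
    intro i _
    by_cases h : i = 0
    · simp [h]
    · simp only [h, if_false]
      rw [div_lt_one hpos]
      exact hPerron i h
  have hr₀bound : ∀ i, i ≠ 0 → |μ i| / μ 0 ≤ r₀ := by
    intro i hi
    have h := Finset.le_sup' (fun i => if i = 0 then (0:ℝ) else |μ i| / μ 0) (Finset.mem_univ i)
    rw [if_neg hi] at h
    exact h
  set r : ℝ := (r₀ + 1) / 2 with hrdef
  have hr0 : 0 < r := by rw [hrdef]; linarith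
  have hr1 : r < 1 := by rw [hrdef]; linarith
  have hr₀r : r₀ ≤ r := by rw [hrdef]; linarith
  -- sign helper
  set es : (Fin d → Bool) → Fin d → ℝ := fun σ i => if σ i then 1 else -1 with hesdef
  have hes_sq : ∀ σ i, es σ i * es σ i = 1 := by
    intro σ i; rw [hesdef]; dsimp only; split <;> norm_num
  -- the good open sets
  set Good : (Fin d → Bool) → Set (Fin d → ℝ) := fun σ =>
    {x | 0 < coord x 0 ∧ ∀ i, i ≠ 0 →
      (r * coord x 0 < es σ i * coord x i ∧ es σ i * coord x i < coord x 0)} with hGooddef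
  have hopen : ∀ σ, IsOpen (Good σ) := by
    intro σ
    have h1 : Good σ = {x | 0 < coord x 0} ∩
        ⋂ i, {x : Fin d → ℝ | i ≠ 0 → (r * coord x 0 < es σ i * coord x i ∧ es σ i * coord x i < coord x 0)} := by
      ext x
      simp [hGooddef, Set.mem_iInter]
    rw [h1]
    apply IsOpen.inter
    · exact isOpen_lt continuous_const (coord_cont 0)
    · apply isOpen_iInter_of_finite
      intro i
      by_cases h : i = 0
      · simp [h]
      · have h2 : {x : Fin d → ℝ | i ≠ 0 → (r * coord x 0 < es σ i * coord x i ∧ es σ i * coord x i < coord x 0)}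
            = {x : Fin d → ℝ | r * coord x 0 < es σ i * coord x i} ∩ {x | es σ i * coord x i < coord x 0} := by
          ext x; simp [h]
        rw [h2]
        exact IsOpen.inter
          (isOpen_lt (continuous_const.mul (coord_cont 0)) (continuous_const.mul (coord_cont i)))
          (isOpen_lt (continuous_const.mul (coord_cont i)) (coord_cont 0))
  have hnonempty : ∀ σ, (Good σ).Nonempty := by
    intro σ
    set t0 : Fin d → ℝ := fun i => if i = 0 then 1 else es σ i * ((r + 1) / 2) with ht0def
    refine ⟨∑ i, t0 i • v i, ?_⟩
    rw [hGooddef]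
    have hc : coord (∑ i, t0 i • v i) = t0 := coord_sum t0
    constructor
    · rw [hc, ht0def]; norm_num
    · intro i hi
      rw [hc, ht0def]
      simp only [if_neg hi, if_pos rfl, if_true]
      have h2 : es σ i * (es σ i * ((r + 1) / 2)) = (r + 1) / 2 := by
        rw [← mul_assoc, hes_sq]; ring
      rw [h2]
      constructor <;> linarith
  -- the generators
  have hU : ∀ σ, ∃ u : Fin d → ℝ, u ∈ L ∧ u ∈ Good σ := by
    intro σ
    obtain ⟨x, hxD, hxO⟩ := hdense.exists_mem_open (hopen σ) (hnonempty σ)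
    obtain ⟨c, hc, hcL⟩ := hxD
    refine ⟨c • x, hcL, ?_⟩
    rw [hGooddef] at hxO ⊢
    obtain ⟨h0, hi⟩ := hxO
    have hcs : coord (c • x) = c • coord x := map_smul coord c x
    constructor
    · rw [hcs]; simp only [Pi.smul_apply, smul_eq_mul]; exact mul_pos hc h0
    · intro i hine
      obtain ⟨ha, hb⟩ := hi i hine
      rw [hcs]
      simp only [Pi.smul_apply, smul_eq_mul]
      constructor <;> nlinarith
  choose U hUL hUGood using hU
  have hU0 : ∀ σ, 0 < coord (U σ) 0 := fun σ => (hUGood σ).1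
  have hUbound : ∀ σ i, i ≠ 0 → |coord (U σ) i| < coord (U σ) 0 := by
    intro σ i hi
    obtain ⟨h1, h2⟩ := (hUGood σ).2 i hi
    have hr0' : 0 < r * coord (U σ) 0 := mul_pos hr0 (hU0 σ)
    rw [hesdef] at h1 h2
    dsimp only at h1 h2
    by_cases h : σ i
    · rw [if_pos h] at h1 h2
      rw [abs_of_pos (by linarith)]
      linarith
    · rw [if_neg h] at h1 h2
      rw [abs_of_neg (by nlinarith)]
      linarith
  -- transport to Fin (2^d)
  have hcard : Fintype.card (Fin d → Bool) = 2 ^ d := by simp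
  set e : (Fin d → Bool) ≃ Fin (2 ^ d) := Fintype.equivFinOfCardEq hcard with hedef
  refine ⟨2 ^ d, fun j => U (e.symm j), fun j => hUL _, ?_, ?_⟩
  · -- image of the cone is inside the polyhedral cone
    intro x hx
    rw [hKmem] at hx
    obtain ⟨ha0, hai⟩ := hx
    have hCx : C.mulVec x = ∑ i, (μ i * coord x i) • v i := by
      conv_lhs => rw [← sum_coord x]
      rw [← Matrix.mulVecLin_apply, map_sum]
      apply Finset.sum_congr rfl
      intro i _
      rw [map_smul, Matrix.mulVecLin_apply, heig i, smul_smul, mul_comm]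
    have hb : coord (C.mulVec x) = fun i => μ i * coord x i := by rw [hCx, coord_sum]
    set b0 : ℝ := μ 0 * coord x 0 with hb0def
    have hb0 : 0 < b0 := mul_pos hpos ha0
    set p : Fin d → ℝ := fun i => (μ i * coord x i) / b0 with hpdef
    set t : (Fin d → Bool) → (Fin d → ℝ) := fun σ i =>
      if i = 0 then 1 else coord (U σ) i / coord (U σ) 0 with htdef
    obtain ⟨lam, hlam0, hlamsum⟩ := cube_lemma r hr0 p (Finset.univ.erase 0) t
      (by
        intro i hi
        have hine : i ≠ 0 := Finset.ne_of_mem_erase hi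
        have h1 : |μ i| ≤ r₀ * μ 0 := by
          have := hr₀bound i hine
          rw [div_le_iff₀ hpos] at this
          exact this
        have h2 : |coord x i| ≤ coord x 0 := le_of_lt (hai i hine)
        rw [hpdef]
        dsimp only
        rw [abs_div, abs_of_pos hb0, abs_mul, div_le_iff₀ hb0]
        have h3 : |μ i| * |coord x i| ≤ (r₀ * μ 0) * coord x 0 :=
          mul_le_mul h1 h2 (abs_nonneg _) (by positivity)
        nlinarith [mul_pos hpos ha0])
      (by
        intro σ i hi
        have hine : i ≠ 0 := Finset.ne_of_mem_erase hi
        obtain ⟨h1, h2⟩ := (hUGood σ).2 i hine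
        rw [hesdef] at h1 h2
        dsimp only at h1 h2
        rw [htdef]
        dsimp only
        rw [if_neg hine]
        constructor
        · intro hσ
          rw [if_pos hσ, one_mul] at h1
          rw [le_div_iff₀ (hU0 σ)]
          linarith
        · intro hσ
          have hσ' : ¬ (σ i = true) := by simp [hσ]
          rw [if_neg hσ'] at h1
          rw [div_le_iff₀ (hU0 σ)]
          linarith)
      (by
        intro σ i hi
        have hieq : i = 0 := by
          by_contra h
          exact hi (Finset.mem_erase.2 ⟨h, Finset.mem_univ i⟩)
        subst hieq
        rw [htdef, hpdef]
        dsimp only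
        rw [if_pos rfl, ← hb0def, div_self hb0.ne'])
    set c : (Fin d → Bool) → ℝ := fun σ => b0 * lam σ / coord (U σ) 0 with hcdef
    have hc0 : ∀ σ, 0 ≤ c σ := fun σ =>
      div_nonneg (mul_nonneg hb0.le (hlam0 σ)) (hU0 σ).le
    have key : ∀ i, (∑ σ, c σ * coord (U σ) i) = μ i * coord x i := by
      intro i
      have hs := congrFun hlamsum i
      rw [Finset.sum_apply] at hs
      simp only [Pi.smul_apply, smul_eq_mul] at hs
      have hterm : ∀ σ, c σ * coord (U σ) i = b0 * (lam σ * t σ i) := by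
        intro σ
        rw [htdef, hcdef]
        dsimp only
        by_cases h : i = 0
        · subst h
          rw [if_pos rfl]
          field_simp
          rw [mul_div_assoc, div_self (hU0 σ).ne', mul_one]
        · rw [if_neg h]
          field_simp
      rw [Finset.sum_congr rfl fun σ _ => hterm σ, ← Finset.mul_sum, hs, hpdef]
      dsimp only
      field_simp
    have hrepr : C.mulVec x = ∑ σ, c σ • U σ := by
      have hco : coord (∑ σ, c σ • U σ) = coord (C.mulVec x) := by
        rw [map_sum, hb]
        funext i
        rw [Finset.sum_apply]
        simp only [map_smul, Pi.smul_apply, smul_eq_mul]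
        exact key i
      calc C.mulVec x = ∑ i, coord (C.mulVec x) i • v i := (sum_coord _).symm
        _ = ∑ i, coord (∑ σ, c σ • U σ) i • v i := by rw [hco]
        _ = ∑ σ, c σ • U σ := sum_coord _
    refine ⟨fun j => c (e.symm j), fun j => hc0 _, ?_⟩
    rw [hrepr]
    exact (Equiv.sum_comp e.symm fun σ => c σ • U σ).symm
  · -- the polyhedral cone is inside the open cone
    intro y hy hy0
    obtain ⟨bb, hbb0, hbbsum⟩ := hy
    set c : (Fin d → Bool) → ℝ := fun σ => bb (e σ) with hcdef
    have hc0 : ∀ σ, 0 ≤ c σ := fun σ => hbb0 (e σ)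
    have hysum : y = ∑ σ, c σ • U σ := by
      rw [hbbsum]
      rw [← Equiv.sum_comp e.symm fun σ => c σ • U σ]
      apply Finset.sum_congr rfl
      intro j _
      rw [hcdef]
      simp
    have hex : ∃ τ, 0 < c τ := by
      by_contra hcon
      push_neg at hcon
      have hz : ∀ σ, c σ = 0 := fun σ => le_antisymm (hcon σ) (hc0 σ)
      apply hy0
      rw [hysum]
      exact Finset.sum_eq_zero fun σ _ => by rw [hz σ, zero_smul]
    obtain ⟨τ, hτ⟩ := hex
    have hyc : ∀ i, coord y i = ∑ σ, c σ * coord (U σ) i := by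
      intro i
      rw [hysum, map_sum, Finset.sum_apply]
      simp only [map_smul, Pi.smul_apply, smul_eq_mul]
    rw [hKmem]
    constructor
    · rw [hyc 0]
      apply Finset.sum_pos'
      · intro σ _
        exact mul_nonneg (hc0 σ) (hU0 σ).le
      · exact ⟨τ, Finset.mem_univ τ, mul_pos hτ (hU0 τ)⟩
    · intro i hi
      rw [hyc i, hyc 0]
      calc |∑ σ, c σ * coord (U σ) i| ≤ ∑ σ, |c σ * coord (U σ) i| :=
            Finset.abs_sum_le_sum_abs _ _
        _ = ∑ σ, c σ * |coord (U σ) i| := by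
            apply Finset.sum_congr rfl
            intro σ _
            rw [abs_mul, abs_of_nonneg (hc0 σ)]
        _ < ∑ σ, c σ * coord (U σ) 0 := by
            apply Finset.sum_lt_sum
            · intro σ _
              exact mul_le_mul_of_nonneg_left (hUbound σ i hi).le (hc0 σ)
            · exact ⟨τ, Finset.mem_univ τ, mul_lt_mul_of_pos_left (hUbound τ i hi) hτ⟩
end

section
/- An algebraic integer λ is a weak Perron number if and only if λ^n is a Perron number for some positive integer n. -/
section AbstractLemmas

variable {G : Type*} [Group G] {Γ : Type*} [CommGroup Γ] [LinearOrder Γ] [IsOrderedMonoid Γ]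

/-- Closure of the max set under multiplication and under `c`. -/
lemma perron_closure (h : G → Γ) (c : G)
    (hrel : ∀ σ, h σ = h 1 → ∀ τ, h (τ * (c * σ)) * h (τ * σ) = h τ * h τ)
    (hbound : ∀ τ, h τ ≤ h 1) :
    ∀ ρ, h ρ = h 1 → ∀ σ, h σ = h 1 → h (ρ * (c * σ)) = h 1 ∧ h (ρ * σ) = h 1 := by
  intro ρ hρ σ hσ
  have hr := hrel σ hσ ρ
  rw [hρ] at hr
  have h1 : h (ρ * (c * σ)) ≤ h 1 := hbound _
  have h2 : h (ρ * σ) ≤ h 1 := hbound _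
  constructor
  · rcases lt_or_eq_of_le h1 with hlt | he
    · exact absurd hr (ne_of_lt (mul_lt_mul_of_lt_of_le hlt h2))
    · exact he
  · rcases lt_or_eq_of_le h2 with hlt | he
    · exact absurd hr (ne_of_lt (mul_lt_mul_of_le_of_lt h1 hlt))
    · exact he

lemma perron_pow_mem {S : Set G} (hmul : ∀ a ∈ S, ∀ b ∈ S, a * b ∈ S) {σ : G} (hσ : σ ∈ S) :
    ∀ k : ℕ, σ ^ (k + 1) ∈ S := by
  intro k; induction k with
  | zero => simpa using hσ
  | succ k ih => rw [pow_succ]; exact hmul _ ih _ hσ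

lemma perron_inv_mem [Finite G] {S : Set G} (h1S : (1:G) ∈ S)
    (hmul : ∀ a ∈ S, ∀ b ∈ S, a * b ∈ S) {σ : G}
    (hσ : σ ∈ S) : σ⁻¹ ∈ S := by
  have ho : 1 ≤ orderOf σ := (orderOf_pos σ)
  have : σ⁻¹ = σ ^ (orderOf σ - 1) := by
    rw [inv_eq_iff_mul_eq_one, ← pow_succ', Nat.sub_add_cancel ho, pow_orderOf_eq_one]
  rw [this]
  rcases Nat.exists_eq_add_of_le ho with ⟨k, hk⟩
  rw [hk]
  simp only [Nat.add_sub_cancel_left, Nat.add_sub_cancel]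
  cases k with
  | zero => simpa using h1S
  | succ k => exact perron_pow_mem hmul hσ k

/-- Coset constancy: if the relation holds at every place for all σ in a subgroup-like set S,
then h is constant on left cosets of S. -/
lemma perron_coset [Finite G] {S : Set G} (c : G)
    (h1S : (1:G) ∈ S)
    (hmul : ∀ a ∈ S, ∀ b ∈ S, a * b ∈ S)
    (hcS : ∀ a ∈ S, c * a ∈ S)
    (h : G → Γ)
    (hrel : ∀ σ ∈ S, ∀ τ, h (τ * (c * σ)) * h (τ * σ) = h τ * h τ) :
    ∀ τ : G, ∀ σ ∈ S, h (τ * σ) = h τ := by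
  intro τ σ hσ
  obtain ⟨σ₁, hσ₁S, hmax⟩ := Set.exists_max_image S (fun s => h (τ * s)) (Set.toFinite S) ⟨1, h1S⟩
  have key : ∀ ρ ∈ S, h (τ * σ₁ * ρ) = h (τ * σ₁) := by
    intro ρ hρ
    have hr := hrel ρ hρ (τ * σ₁)
    have e1 : h (τ * σ₁ * (c * ρ)) ≤ h (τ * σ₁) := by
      have hmem : σ₁ * (c * ρ) ∈ S := hmul _ hσ₁S _ (hcS _ hρ)
      have := hmax _ hmem
      rwa [← mul_assoc] at this
    have e2 : h (τ * σ₁ * ρ) ≤ h (τ * σ₁) := by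
      have hmem : σ₁ * ρ ∈ S := hmul _ hσ₁S _ hρ
      have := hmax _ hmem
      rwa [← mul_assoc] at this
    rcases lt_or_eq_of_le e2 with hlt | he
    · exact absurd hr (ne_of_lt (mul_lt_mul_of_le_of_lt e1 hlt))
    · exact he
  have hinv : σ₁⁻¹ ∈ S := perron_inv_mem h1S hmul hσ₁S
  have t1 : h (τ * σ₁) = h τ := by
    have := key σ₁⁻¹ hinv
    rw [mul_assoc, mul_inv_cancel, mul_one] at this
    exact this.symm
  have t2 : h (τ * σ) = h (τ * σ₁) := by
    have := key (σ₁⁻¹ * σ) (hmul _ hinv _ hσ)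
    rwa [mul_assoc, ← mul_assoc σ₁, mul_inv_cancel, one_mul] at this
  rw [t2, t1]

end AbstractLemmas

open IsDedekindDomain Classical in
lemma perron_span_eq {R : Type*} [CommRing R] [IsDomain R] [IsDedekindDomain R]
    {a b : R} (ha : a ≠ 0) (hb : b ≠ 0)
    (hv : ∀ v : HeightOneSpectrum R, v.intValuation a = v.intValuation b) :
    Ideal.span ({a} : Set R) = Ideal.span ({b} : Set R) := by
  have hcount : ∀ v : HeightOneSpectrum R,
      (Associates.mk v.asIdeal).count (Associates.mk (Ideal.span {a} : Ideal R)).factors =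
      (Associates.mk v.asIdeal).count (Associates.mk (Ideal.span {b} : Ideal R)).factors := by
    intro v
    have := hv v
    rw [IsDedekindDomain.HeightOneSpectrum.intValuation_apply,
      IsDedekindDomain.HeightOneSpectrum.intValuation_apply,
      IsDedekindDomain.HeightOneSpectrum.intValuationDef_if_neg v ha,
      IsDedekindDomain.HeightOneSpectrum.intValuationDef_if_neg v hb] at this
    have h2 := WithZero.exp_injective this
    have h3 := h2
    omega
  have hIa : (Ideal.span {a} : Ideal R) ≠ 0 := by
    simpa [Ideal.span_singleton_eq_bot] using ha
  have hIb : (Ideal.span {b} : Ideal R) ≠ 0 := by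
    simpa [Ideal.span_singleton_eq_bot] using hb
  rw [← Ideal.finprod_heightOneSpectrum_factorization hIa,
    ← Ideal.finprod_heightOneSpectrum_factorization hIb]
  apply finprod_congr
  intro v
  rw [IsDedekindDomain.HeightOneSpectrum.maxPowDividing,
    IsDedekindDomain.HeightOneSpectrum.maxPowDividing, hcount v]


/-- `x` is a Perron number: a positive real algebraic integer strictly larger
in modulus than every other root of its minimal polynomial over ℚ. -/
def IsPerron (x : ℝ) : Prop :=
  0 < x ∧ IsIntegral ℤ x ∧
    ∀ z : ℂ, Polynomial.aeval z (minpoly ℚ x) = 0 → z ≠ (x : ℂ) → ‖z‖ < x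

/-- `x` is a weak Perron number: a positive real algebraic integer at least as
large in modulus as every root of its minimal polynomial over ℚ. -/
def IsWeakPerron (x : ℝ) : Prop :=
  0 < x ∧ IsIntegral ℤ x ∧
    ∀ z : ℂ, Polynomial.aeval z (minpoly ℚ x) = 0 → ‖z‖ ≤ x

set_option maxHeartbeats 2000000 in
set_option synthInstance.maxHeartbeats 400000 in
open scoped NNReal in
open Polynomial IntermediateField NumberField IsDedekindDomain in
/-- (Lind) An algebraic integer `λ > 0` is weak Perron iff some positive power
`λ^n` is Perron. -/
theorem weakPerron_iff_pow_perron (lam : ℝ) (h : IsIntegral ℤ lam)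
    (hpos : 0 < lam) :
    IsWeakPerron lam ↔ ∃ n : ℕ, 0 < n ∧ IsPerron (lam ^ n) := by
  classical
  have hQ : IsIntegral ℚ lam := h.tower_top
  set p : Polynomial ℚ := minpoly ℚ lam with hpdef
  have hpne : p ≠ 0 := minpoly.ne_zero hQ
  have hsplits : (p.map (algebraMap ℚ ℂ)).Splits := IsAlgClosed.splits _
  set K : IntermediateField ℚ ℂ := IntermediateField.adjoin ℚ (p.rootSet ℂ) with hKdef
  haveI hsf : Polynomial.IsSplittingField ℚ K p :=
    IntermediateField.adjoin_rootSet_isSplittingField hsplits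
  haveI : FiniteDimensional ℚ K := Polynomial.IsSplittingField.finiteDimensional K p
  haveI : Normal ℚ K := Normal.of_isSplittingField p
  haveI : NumberField K := ⟨⟩
  -- lam as an element of K
  have haev : Polynomial.aeval (lam : ℂ) p = 0 := by
    have : ((lam : ℝ) : ℂ) = algebraMap ℝ ℂ lam := rfl
    rw [this, Polynomial.aeval_algebraMap_apply, minpoly.aeval, map_zero]
  have hlamroot : (lam : ℂ) ∈ p.rootSet ℂ := by
    rw [Polynomial.mem_rootSet]; exact ⟨hpne, haev⟩
  set lamK : K := ⟨(lam : ℂ), IntermediateField.subset_adjoin ℚ _ hlamroot⟩ with hlamKdef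
  have hcoe : (lamK : ℂ) = (lam : ℂ) := rfl
  have hlamKne : lamK ≠ 0 := by
    intro h0
    apply hpos.ne'
    have : (lamK : ℂ) = 0 := by rw [h0]; rfl
    rw [hcoe] at this
    exact_mod_cast this
  -- minpoly facts
  have hminK : minpoly ℚ lamK = p := by
    have h1 : minpoly ℚ (K.val lamK) = minpoly ℚ lamK :=
      minpoly.algHom_eq K.val (Subtype.val_injective) lamK
    have h2 : K.val lamK = algebraMap ℝ ℂ lam := rfl
    rw [h2, minpoly.algebraMap_eq (algebraMap ℝ ℂ).injective] at h1
    exact h1.symm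
  have hminKn : ∀ n : ℕ, minpoly ℚ (lamK ^ n) = minpoly ℚ (lam ^ n) := by
    intro n
    have h1 : minpoly ℚ (K.val (lamK ^ n)) = minpoly ℚ (lamK ^ n) :=
      minpoly.algHom_eq K.val (Subtype.val_injective) _
    have h2 : K.val (lamK ^ n) = algebraMap ℝ ℂ (lam ^ n) := by
      push_cast [map_pow]; rfl
    rw [h2, minpoly.algebraMap_eq (algebraMap ℝ ℂ).injective] at h1
    exact h1.symm
  have hlamK_int : IsIntegral ℤ lamK := by
    rw [← isIntegral_algHom_iff (K.val.restrictScalars ℤ) Subtype.val_injective]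
    have : (K.val.restrictScalars ℤ) lamK = algebraMap ℝ ℂ lam := rfl
    rw [this]
    exact h.map (IsScalarTower.toAlgHom ℤ ℝ ℂ)
  -- lifting embeddings to automorphisms
  have lift : ∀ ψ : K →ₐ[ℚ] ℂ, ∃ τ : K ≃ₐ[ℚ] K, ∀ x : K, ((τ x : K) : ℂ) = ψ x := by
    intro ψ
    refine ⟨(AlgEquiv.ofInjectiveField ψ).trans
      (IntermediateField.equivOfEq (@AlgHom.fieldRange_of_normal ℚ ℂ _ _ _ K ‹Normal ℚ K› ψ)), fun x => ?_⟩
    rfl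
  -- complex conjugation
  obtain ⟨c, hc⟩ := lift (((Complex.conjAe.toAlgHom.restrictScalars ℚ)).comp K.val)
  have hcval : ∀ x : K, ((c x : K) : ℂ) = (starRingEnd ℂ) (x : ℂ) := by
    intro x; rw [hc x]; rfl
  -- roots of p among conjugates
  have hconjroot : ∀ τ : K ≃ₐ[ℚ] K, Polynomial.aeval ((τ lamK : K) : ℂ) p = 0 := by
    intro τ
    have h1 : Polynomial.aeval (τ lamK) (minpoly ℚ lamK) = 0 := by
      rw [show (τ lamK) = τ.toAlgHom lamK from rfl, Polynomial.aeval_algHom_apply,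
        minpoly.aeval, map_zero]
    rw [hminK] at h1
    have h2 : Polynomial.aeval ((τ lamK : K) : ℂ) p = K.val (Polynomial.aeval (τ lamK) p) := by
      rw [show ((τ lamK : K) : ℂ) = K.val (τ lamK) from rfl, Polynomial.aeval_algHom_apply]
    rw [h2, h1, map_zero]
  have hne : ∀ τ : K ≃ₐ[ℚ] K, ((τ lamK : K) : ℂ) ≠ 0 := by
    intro τ h0
    have h1 : τ lamK = 0 := by
      apply Subtype.val_injective; simpa using h0
    exact hlamKne (τ.injective (by rw [h1, map_zero]))
  haveI : Algebra.IsAlgebraic ℚ K := Algebra.IsAlgebraic.of_finite ℚ K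
  constructor
  · intro hWP
    obtain ⟨-, -, hW3⟩ := hWP
    have hneU : ∀ τ : K ≃ₐ[ℚ] K, ‖((τ lamK : K) : ℂ)‖₊ ≠ 0 := by
      intro τ; simpa using hne τ
    set harch : (K ≃ₐ[ℚ] K) → ℝ≥0ˣ := fun τ => Units.mk0 _ (hneU τ) with harchdef
    have harch_val : ∀ τ, (harch τ : ℝ≥0) = ‖((τ lamK : K) : ℂ)‖₊ := fun τ => rfl
    have e2 : ((harch 1 : ℝ≥0) : ℝ) = lam := by
      rw [harch_val]
      simp [AlgEquiv.one_apply, hcoe,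
        abs_of_pos hpos]
    have e1 : ∀ σ, ((harch σ : ℝ≥0) : ℝ) = ‖((σ lamK : K) : ℂ)‖ := by
      intro σ; rw [harch_val]; simp
    have hSabs : ∀ σ : K ≃ₐ[ℚ] K,
        harch σ = harch 1 ↔ ‖((σ lamK : K) : ℂ)‖ = lam := by
      intro σ
      constructor
      · intro hh
        rw [← e1, hh, e2]
      · intro hh
        apply Units.ext
        apply NNReal.coe_injective
        rw [show ((harch σ : ℝ≥0) : ℝ) = _ from e1 σ, hh, ← e2]
    have hbound : ∀ τ, harch τ ≤ harch 1 := by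
      intro τ
      rw [← Units.val_le_val, ← NNReal.coe_le_coe]
      rw [show ((harch τ : ℝ≥0) : ℝ) = _ from e1 τ, e2]
      exact hW3 _ (hconjroot τ)
    have hEσ : ∀ σ : K ≃ₐ[ℚ] K, harch σ = harch 1 →
        ((c * σ) lamK) * (σ lamK) = lamK ^ 2 := by
      intro σ hσ
      have habs : ‖((σ lamK : K) : ℂ)‖ = lam := (hSabs σ).mp hσ
      apply Subtype.val_injective
      have h1 : (((c * σ) lamK : K) : ℂ) = (starRingEnd ℂ) ((σ lamK : K) : ℂ) := by
        rw [AlgEquiv.mul_apply, hcval]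
      push_cast
      rw [h1, mul_comm ((starRingEnd ℂ) _), Complex.mul_conj, Complex.normSq_eq_norm_sq, habs]
      norm_cast
      simp [hcoe]
    have hrel : ∀ σ, harch σ = harch 1 → ∀ τ : K ≃ₐ[ℚ] K,
        ((τ * (c * σ)) lamK) * ((τ * σ) lamK) = (τ lamK) ^ 2 := by
      intro σ hσ τ
      have h0 := congrArg τ (hEσ σ hσ)
      rw [map_mul, map_pow] at h0
      simpa [AlgEquiv.mul_apply] using h0
    have hrelArch : ∀ σ, harch σ = harch 1 →
        ∀ τ, harch (τ * (c * σ)) * harch (τ * σ) = harch τ * harch τ := by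
      intro σ hσ τ
      apply Units.ext
      rw [Units.val_mul, Units.val_mul]
      simp only [harch_val]
      rw [← nnnorm_mul, ← nnnorm_mul]
      congr 1
      have h2 := congrArg (fun x : K => (x : ℂ)) (hrel σ hσ τ)
      push_cast at h2
      rw [h2]
      ring
    set S : Set (K ≃ₐ[ℚ] K) := {σ | harch σ = harch 1} with hSdef
    have h1S : (1 : K ≃ₐ[ℚ] K) ∈ S := rfl
    have hclosure := perron_closure harch c hrelArch hbound
    have hmul : ∀ a ∈ S, ∀ b ∈ S, a * b ∈ S := fun a ha b hb => (hclosure a ha b hb).2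
    have hcS : ∀ a ∈ S, c * a ∈ S := by
      intro a ha
      have := (hclosure 1 rfl a ha).1
      rwa [one_mul] at this
    have harchCoset : ∀ τ : K ≃ₐ[ℚ] K, ∀ σ ∈ S, harch (τ * σ) = harch τ :=
      perron_coset c h1S hmul hcS harch (fun σ hσ τ => hrelArch σ hσ τ)
    -- ring of integers
    have hAint : ∀ τ : K ≃ₐ[ℚ] K, IsIntegral ℤ (τ lamK) := fun τ =>
      hlamK_int.map (τ.toAlgHom.restrictScalars ℤ)
    set A : (K ≃ₐ[ℚ] K) → 𝓞 K := fun τ => ⟨τ lamK, hAint τ⟩ with hAdef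
    have hAcoe : ∀ τ, ((A τ : 𝓞 K) : K) = τ lamK := fun τ => rfl
    have hlamKne' : ∀ τ : K ≃ₐ[ℚ] K, τ lamK ≠ 0 := fun τ hh =>
      hlamKne (τ.injective (by rw [hh, map_zero]))
    have hAne : ∀ τ, A τ ≠ 0 := by
      intro τ h0
      apply hlamKne' τ
      rw [← hAcoe τ, h0]
      exact map_zero (algebraMap (𝓞 K) K)
    have hErel : ∀ σ ∈ S, ∀ τ, A (τ * (c * σ)) * A (τ * σ) = A τ ^ 2 := by
      intro σ hσ τ
      apply NumberField.RingOfIntegers.ext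
      show (algebraMap (𝓞 K) K) _ = (algebraMap (𝓞 K) K) _
      rw [map_mul, map_pow]
      rw [show (algebraMap (𝓞 K) K) (A (τ * (c * σ))) = (τ * (c * σ)) lamK from rfl,
        show (algebraMap (𝓞 K) K) (A (τ * σ)) = (τ * σ) lamK from rfl,
        show (algebraMap (𝓞 K) K) (A τ) = τ lamK from rfl]
      exact hrel σ hσ τ
    have hvEq : ∀ σ ∈ S, ∀ v : HeightOneSpectrum (𝓞 K),
        v.intValuation (A σ) = v.intValuation (A 1) := by
      intro σ hσ v
      have hfinNe : ∀ τ, v.intValuation (A τ) ≠ 0 := by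
        intro τ
        rw [IsDedekindDomain.HeightOneSpectrum.intValuation_apply]
        exact IsDedekindDomain.HeightOneSpectrum.intValuation_ne_zero v _ (hAne τ)
      set hfin : (K ≃ₐ[ℚ] K) → (WithZero (Multiplicative ℤ))ˣ :=
        fun τ => Units.mk0 _ (hfinNe τ) with hfindef
      have hrelFin : ∀ σ' ∈ S, ∀ τ,
          hfin (τ * (c * σ')) * hfin (τ * σ') = hfin τ * hfin τ := by
        intro σ' hσ' τ
        apply Units.ext
        rw [Units.val_mul, Units.val_mul]
        show v.intValuation _ * v.intValuation _ = v.intValuation _ * v.intValuation _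
        rw [← map_mul, ← map_mul, hErel σ' hσ' τ, sq]
      have hh := perron_coset c h1S hmul hcS hfin hrelFin 1 σ hσ
      rw [one_mul] at hh
      exact congrArg Units.val hh
    have hKrel : ∀ σ ∈ S, ∃ w : 𝓞 K, A σ = A 1 * w := by
      intro σ hσ
      have hspan := perron_span_eq (hAne σ) (hAne 1) (fun v => hvEq σ hσ v)
      have hle : Ideal.span {A σ} ≤ Ideal.span {A 1} := hspan.le
      rw [Ideal.span_singleton_le_span_singleton] at hle
      exact hle
    -- Kronecker: the ratio is a root of unity
    have hpow : ∀ σ : K ≃ₐ[ℚ] K, ∃ m : ℕ, 0 < m ∧ (σ ∈ S → (σ lamK) ^ m = lamK ^ m) := by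
      intro σ
      by_cases hσ : σ ∈ S
      · obtain ⟨w, hw⟩ := hKrel σ hσ
        have hKrel' : σ lamK = lamK * (w : K) := by
          have h5 := congrArg (fun x : 𝓞 K => (algebraMap (𝓞 K) K) x) hw
          simp only [map_mul] at h5
          rw [show (algebraMap (𝓞 K) K) (A σ) = σ lamK from rfl,
            show (algebraMap (𝓞 K) K) (A 1) = (1 : K ≃ₐ[ℚ] K) lamK from rfl,
            AlgEquiv.one_apply] at h5
          exact h5
        have hwnorm : ∀ φ : K →+* ℂ, ‖φ (w : K)‖ = 1 := by
          intro φ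
          obtain ⟨τ, hτ⟩ := lift φ.toRatAlgHom
          have hφ : ∀ x : K, φ x = ((τ x : K) : ℂ) := fun x => (hτ x).symm
          have h1 : ‖φ (σ lamK)‖₊ = ‖φ lamK‖₊ := by
            rw [hφ, hφ]
            have e := harchCoset τ σ hσ
            have e' := congrArg (fun u : ℝ≥0ˣ => (u : ℝ≥0)) e
            simp only [harch_val] at e'
            rw [show τ (σ lamK) = (τ * σ) lamK from rfl]
            exact e'
          have h3 : ‖φ lamK‖₊ ≠ 0 := by
            rw [hφ]
            exact hneU τ
          have h4 : ‖φ lamK‖₊ * ‖φ (w : K)‖₊ = ‖φ lamK‖₊ := by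
            rw [← nnnorm_mul, ← map_mul, ← hKrel', h1]
          have h5 : ‖φ (w : K)‖₊ = 1 := by
            have := mul_left_cancel₀ h3 (h4.trans (mul_one _).symm)
            exact this
          have := congrArg (fun x : ℝ≥0 => (x : ℝ)) h5
          simpa using this
        obtain ⟨m, hm, hwm⟩ := NumberField.Embeddings.pow_eq_one_of_norm_eq_one K ℂ
          (NumberField.RingOfIntegers.isIntegral_coe w) hwnorm
        refine ⟨m, hm, fun _ => ?_⟩
        rw [hKrel', mul_pow, hwm, mul_one]
      · exact ⟨1, one_pos, fun hh => absurd hh hσ⟩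
    choose f hf1 hf2 using hpow
    have hSfinite : S.Finite := Set.toFinite S
    set n := ∏ σ ∈ hSfinite.toFinset, f σ with hndef
    have hnpos : 0 < n := Finset.prod_pos (fun σ _ => hf1 σ)
    refine ⟨n, hnpos, pow_pos hpos n, h.pow n, ?_⟩
    intro z hz hzne
    rw [← hminKn n] at hz
    have hminKnne : minpoly ℚ (lamK ^ n) ≠ 0 := by
      rw [hminKn]; exact minpoly.ne_zero (hQ.pow n)
    have hzr : z ∈ (minpoly ℚ (lamK ^ n)).rootSet ℂ :=
      Polynomial.mem_rootSet.mpr ⟨hminKnne, hz⟩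
    rw [← Algebra.IsAlgebraic.range_eval_eq_rootSet_minpoly ℂ (lamK ^ n)] at hzr
    obtain ⟨ψ, hψ⟩ := hzr
    have hψ' : ψ (lamK ^ n) = z := hψ
    obtain ⟨τ, hτ⟩ := lift ψ
    have hzval : z = ((τ lamK : K) : ℂ) ^ n := by
      rw [← hψ', ← hτ (lamK ^ n), map_pow]
      push_cast
      rfl
    by_cases hτS : τ ∈ S
    · exfalso
      have hdvdn : f τ ∣ n := Finset.dvd_prod_of_mem f (hSfinite.mem_toFinset.mpr hτS)
      obtain ⟨k, hk⟩ := hdvdn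
      have hpown : (τ lamK) ^ n = lamK ^ n := by
        rw [hk, pow_mul, hf2 τ hτS, ← pow_mul]
      apply hzne
      have : ((τ lamK : K) : ℂ) ^ n = ((lamK : ℂ)) ^ n := by
        have := congrArg (fun x : K => (x : ℂ)) hpown
        push_cast at this
        exact this
      rw [hzval, this, hcoe]
      push_cast
      rfl
    · have hle : ‖((τ lamK : K) : ℂ)‖ ≤ lam := hW3 _ (hconjroot τ)
      have hne' : ‖((τ lamK : K) : ℂ)‖ ≠ lam := fun he => hτS ((hSabs τ).mpr he)
      have hlt : ‖((τ lamK : K) : ℂ)‖ < lam := lt_of_le_of_ne hle hne'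
      rw [hzval, norm_pow]
      exact pow_lt_pow_left₀ hlt (norm_nonneg _) hnpos.ne'
  · -- easy direction
    rintro ⟨n, hn, hPn⟩
    refine ⟨hpos, h, ?_⟩
    intro z hz
    have hzr : z ∈ (minpoly ℚ lamK).rootSet ℂ := by
      rw [Polynomial.mem_rootSet, hminK]
      exact ⟨hpne, hz⟩
    rw [← Algebra.IsAlgebraic.range_eval_eq_rootSet_minpoly ℂ lamK] at hzr
    obtain ⟨ψ, hψ⟩ := hzr
    have hzn : Polynomial.aeval (z ^ n) (minpoly ℚ (lam ^ n)) = 0 := by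
      rw [← hminKn n]
      have hψ' : ψ lamK = z := hψ
      have hz' : z ^ n = ψ (lamK ^ n) := by rw [map_pow, hψ']
      rw [hz', Polynomial.aeval_algHom_apply, minpoly.aeval, map_zero]
    by_cases hcase : z ^ n = ((lam ^ n : ℝ) : ℂ)
    · have habs : ‖z‖ ^ n = lam ^ n := by
        have := congrArg norm hcase
        rw [norm_pow, Complex.norm_real, Real.norm_eq_abs, abs_of_nonneg (pow_nonneg hpos.le n)] at this
        exact this
      exact le_of_pow_le_pow_left₀ hn.ne' hpos.le habs.le
    · have hlt := hPn.2.2 (z ^ n) hzn hcase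
      rw [norm_pow] at hlt
      by_contra hcon
      push_neg at hcon
      exact absurd (pow_le_pow_left₀ hpos.le hcon.le n) (not_le.mpr hlt)
end

section
/- For the map φ₃ on the 7-edge bipartite graph P₇ defined by a ↦ aGa, b ↦ bDb, c ↦ cFc, d ↦ aBa, e ↦ cBa, f ↦ aCa, g ↦ bEb, the induced endomorphism of the fundamental group π₁(P₇) ≅ F₆ is an automorphism (equivalently, φ₃ is a homotopy equivalence). -/
/-- `π₁(P₇, v₀)` is free of rank 6 on the loops `x_b = aB, x_c = aC, x_d = aD,
x_e = aE, x_f = aF, x_g = aG` (indexed `0,...,5`). The prototype map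
`φ₃ : a ↦ aGa, b ↦ bDb, c ↦ cFc, d ↦ aBa, e ↦ cBa, f ↦ aCa, g ↦ bEb` fixes
both vertices, and the endomorphism it induces on `π₁(P₇) ≅ F₆` is given on
generators by `x_y ↦ φ₃(a)·φ₃(y)⁻¹`, i.e.
`x_b ↦ x_g x_b x_d⁻¹ x_b`, `x_c ↦ x_g x_c x_f⁻¹ x_c`, `x_d ↦ x_g x_b⁻¹`,
`x_e ↦ x_g x_b⁻¹ x_c`, `x_f ↦ x_g x_c⁻¹`, `x_g ↦ x_g x_b x_e⁻¹ x_b`. -/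
def phi3Induced : FreeGroup (Fin 6) →* FreeGroup (Fin 6) :=
  FreeGroup.lift
    (fun i : Fin 6 =>
      let x : Fin 6 → FreeGroup (Fin 6) := FreeGroup.of
      ![x 5 * x 0 * (x 2)⁻¹ * x 0,
        x 5 * x 1 * (x 4)⁻¹ * x 1,
        x 5 * (x 0)⁻¹,
        x 5 * (x 0)⁻¹ * x 1,
        x 5 * (x 1)⁻¹,
        x 5 * x 0 * (x 3)⁻¹ * x 0] i)

/-- Explicit inverse of `phi3Induced` on generators, obtained by solving for the
generators: `c = d⁻¹e`, `g = f d⁻¹ e`, `b = d⁻¹ f d⁻¹ e`, and then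
`d = b·φ(b)⁻¹·g·b`, `e = b·φ(g)⁻¹·g·b`, `f = c·φ(c)⁻¹·g·c`. -/
def psi3 : FreeGroup (Fin 6) →* FreeGroup (Fin 6) :=
  FreeGroup.lift
    (fun i : Fin 6 =>
      let x : Fin 6 → FreeGroup (Fin 6) := FreeGroup.of
      let b := (x 2)⁻¹ * x 4 * (x 2)⁻¹ * x 3
      let c := (x 2)⁻¹ * x 3
      let g := x 4 * (x 2)⁻¹ * x 3
      ![b, c, b * (x 0)⁻¹ * g * b, b * (x 5)⁻¹ * g * b, c * (x 1)⁻¹ * g * c, g] i)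

lemma cons_val_five' {α : Type*} (a b c d e f : α) : ![a,b,c,d,e,f] 5 = f := rfl

lemma phi3_comp_psi3 : phi3Induced.comp psi3 = MonoidHom.id _ := by
  apply FreeGroup.ext_hom
  intro i
  fin_cases i <;> simp [phi3Induced, psi3, cons_val_five'] <;> group

lemma psi3_comp_phi3 : psi3.comp phi3Induced = MonoidHom.id _ := by
  apply FreeGroup.ext_hom
  intro i
  fin_cases i <;> simp [phi3Induced, psi3, cons_val_five'] <;> group

/-- The prototype map `φ₃` is a homotopy equivalence of `P₇`: the induced
endomorphism of `π₁(P₇) ≅ F₆` is an automorphism. -/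
theorem phi3_induces_automorphism : Function.Bijective phi3Induced := by
  have hl : Function.LeftInverse psi3 phi3Induced := fun x =>
    congrArg (fun h : FreeGroup (Fin 6) →* FreeGroup (Fin 6) => h x) psi3_comp_phi3
  have hr : Function.RightInverse psi3 phi3Induced := fun x =>
    congrArg (fun h : FreeGroup (Fin 6) →* FreeGroup (Fin 6) => h x) phi3_comp_psi3
  exact ⟨hl.injective, hr.surjective⟩
end

section
/- If f: Γ → Γ is a uniformly λ-expanding bipartite graph map (no collapsed edges), then the split map S(f): S(Γ) → S(Γ) is also uniformly λ-expanding, where S(Γ) replaces each edge of Γ by a copy of P₇ with all seven edges of the same length as the replaced edge. -/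
/-- The `m`-fold repetition `(xY)^m` of a 2-letter path. -/
def rep (m : ℕ) (x y : Fin 7) : List (Fin 7 × Bool) :=
  (List.replicate m [(x, true), (y, false)]).flatten

/-- The prototype map `φ_{3+2m}` on the edges `a,...,g = 0,...,6` of `P₇`. -/
def pmap (m : ℕ) : Fin 7 → List (Fin 7 × Bool) :=
  ![(0, true) :: (6, false) :: (rep m 0 1 ++ [(0, true)]),
    (1, true) :: (3, false) :: (rep m 1 2 ++ [(1, true)]),
    (2, true) :: (5, false) :: (rep m 2 0 ++ [(2, true)]),
    (0, true) :: (1, false) :: (rep m 0 1 ++ [(0, true)]),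
    (2, true) :: (1, false) :: (rep m 0 1 ++ [(0, true)]),
    (0, true) :: (2, false) :: (rep m 0 1 ++ [(0, true)]),
    (1, true) :: (4, false) :: (rep m 1 0 ++ [(1, true)])]

/-- The word of the prototype map `φ_n` (for odd `n`): `φ₁` is the identity,
and `φ_{3+2m} = pmap m`. -/
def protoWord (n : ℕ) (y : Fin 7) : List (Fin 7 × Bool) :=
  if n = 1 then [(y, true)] else pmap ((n - 3) / 2) y

/-- The split map `S(f)` on the edges `Fin 7 × ι` of the split graph `S(Γ)`:
the edge `y_i` is sent to the edge path `φ_{‖f(x_i)‖}(y)` whose subscripts are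
those of the edge path `f(x_i)`. -/
def splitMap {ι : Type*} (f : ι → List (ι × Bool)) :
    Fin 7 × ι → List ((Fin 7 × ι) × Bool) :=
  fun yi =>
    List.zipWith (fun p q => ((p.1, q.1), xor p.2 q.2))
      (protoWord (f yi.2).length yi.1) (f yi.2)

lemma rep_length (m : ℕ) (x y : Fin 7) : (rep m x y).length = 2 * m := by
  simp [rep, List.length_flatten, Function.comp, mul_comm]

lemma pmap_length (m : ℕ) (y : Fin 7) : (pmap m y).length = 2 * m + 3 := by
  have h0 : pmap m 0 = (0, true) :: (6, false) :: (rep m 0 1 ++ [(0, true)]) := rfl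
  have h1 : pmap m 1 = (1, true) :: (3, false) :: (rep m 1 2 ++ [(1, true)]) := rfl
  have h2 : pmap m 2 = (2, true) :: (5, false) :: (rep m 2 0 ++ [(2, true)]) := rfl
  have h3 : pmap m 3 = (0, true) :: (1, false) :: (rep m 0 1 ++ [(0, true)]) := rfl
  have h4 : pmap m 4 = (2, true) :: (1, false) :: (rep m 0 1 ++ [(0, true)]) := rfl
  have h5 : pmap m 5 = (0, true) :: (2, false) :: (rep m 0 1 ++ [(0, true)]) := rfl
  have h6 : pmap m 6 = (1, true) :: (4, false) :: (rep m 1 0 ++ [(1, true)]) := rfl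
  fin_cases y <;>
    simp [h0, h1, h2, h3, h4, h5, h6, rep_length]

lemma protoWord_length (n : ℕ) (y : Fin 7) (h1 : 1 ≤ n) (hodd : Odd n) :
    (protoWord n y).length = n := by
  rcases hodd with ⟨k, hk⟩
  subst hk
  rcases k with _ | k
  · simp [protoWord]
  · have : 2 * (k + 1) + 1 ≠ 1 := by omega
    rw [protoWord, if_neg this, pmap_length]
    omega

lemma zipWith_snd {α β γ : Type*} (h : β → γ) :
    ∀ (l₁ : List α) (l₂ : List β), l₁.length = l₂.length →
      List.zipWith (fun _ b => h b) l₁ l₂ = l₂.map h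
  | [], [], _ => rfl
  | a :: l₁, b :: l₂, hl => by
      simp only [List.zipWith_cons_cons, List.map_cons]
      rw [zipWith_snd h l₁ l₂ (by simpa using hl)]
  | [], _ :: _, hl => by simp at hl
  | _ :: _, [], hl => by simp at hl

/-- If `f : Γ → Γ` is a uniformly λ-expanding bipartite graph map with no
collapsed edges, then the split map `S(f) : S(Γ) → S(Γ)` is also uniformly
λ-expanding, where each edge `y_i` of `S(Γ)` has the length `ℓ(x_i)` of the
edge of `Γ` it came from. -/
theorem splitMap_uniformly_expanding (ι : Type*) [Fintype ι]
    (len : ι → ℝ) (lam : ℝ) (f : ι → List (ι × Bool))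
    (hne : ∀ i, 1 ≤ (f i).length) (hodd : ∀ i, Odd (f i).length)
    (hexp : ∀ i, ((f i).map (fun p => len p.1)).sum = lam * len i) :
    ∀ (y : Fin 7) (i : ι),
      ((splitMap f (y, i)).map (fun p => len p.1.2)).sum = lam * len i := by
  intro y i
  rw [← hexp i]
  unfold splitMap
  rw [List.map_zipWith]
  have : (List.zipWith (fun (p : Fin 7 × Bool) (q : ι × Bool) => len q.1)
      (protoWord (f i).length y) (f i)) = (f i).map (fun q => len q.1) :=
    zipWith_snd _ _ _ (protoWord_length _ _ (hne i) (hodd i))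
  simp only at this ⊢
  rw [this]
end

section
/- Let A be a nonnegative square matrix indexed by pairs (k,i) with k ∈ {1,...,m}, i ∈ {1,...,M}, such that A sends the basis vector e_{(k,i)} to e_{(k,i+1)} for i < M, and A·e_{(k,M)} is a vector whose support includes e_{(j,1)} for all j ∈ {1,...,m} and e_{(k,2)}. Then A is mixing: A^{M²} is entrywise positive. More precisely, for each (k,i) and each r ≥ 1, the support of A^{rM}·e_{(k,i)} contains {e_{(j, i+t mod M)} : 1 ≤ j ≤ m, 0 ≤ t ≤ r-1}. -/
open Fin.NatCast

set_option linter.unusedSectionVars false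

namespace StarMix

variable {m M : ℕ} [NeZero m] [NeZero M]

lemma powNonneg (A : Matrix (Fin m × Fin M) (Fin m × Fin M) ℝ)
    (hA : ∀ p q, 0 ≤ A p q) : ∀ n p q, 0 ≤ (A ^ n) p q := by
  intro n
  induction n with
  | zero =>
    intro p q
    rw [pow_zero]
    by_cases h : p = q <;> simp [Matrix.one_apply, h]
  | succ n ih =>
    intro p q
    rw [pow_succ, Matrix.mul_apply]
    exact Finset.sum_nonneg fun x _ => mul_nonneg (ih p x) (hA x q)

lemma powTrans (A : Matrix (Fin m × Fin M) (Fin m × Fin M) ℝ)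
    (hA : ∀ p q, 0 ≤ A p q) {a b : ℕ} {p q s : Fin m × Fin M}
    (h1 : 0 < (A ^ a) p q) (h2 : 0 < (A ^ b) q s) :
    0 < (A ^ (a + b)) p s := by
  rw [pow_add, Matrix.mul_apply]
  exact Finset.sum_pos' (fun x _ => mul_nonneg (powNonneg A hA a p x) (powNonneg A hA b x s))
    ⟨q, Finset.mem_univ q, mul_pos h1 h2⟩

lemma finValAddCast (i : Fin M) (n : ℕ) :
    ((i + (n : Fin M)) : Fin M).val = ((i : ℕ) + n) % M := by
  rw [Fin.val_add, Fin.val_natCast]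
  conv_rhs => rw [Nat.add_mod, Nat.mod_eq_of_lt i.isLt]

lemma shiftPos (A : Matrix (Fin m × Fin M) (Fin m × Fin M) ℝ)
    (hA : ∀ p q, 0 ≤ A p q)
    (hshift : ∀ (k : Fin m) (i : Fin M), (i : ℕ) + 1 < M →
      ∀ p, A p (k, i) = if p = (k, i + 1) then 1 else 0) :
    ∀ (n : ℕ) (k : Fin m) (i : Fin M), (i : ℕ) + n < M →
      0 < (A ^ n) (k, i + (n : Fin M)) (k, i) := by
  intro n
  induction n with
  | zero =>
    intro k i _
    simp [Matrix.one_apply]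
  | succ n ih =>
    intro k i h
    have h' : (i : ℕ) + n < M := by omega
    have hv : ((i + (n : Fin M)) : Fin M).val = (i : ℕ) + n := by
      rw [finValAddCast, Nat.mod_eq_of_lt h']
    have hstep : 0 < A (k, i + (n : Fin M) + 1) (k, i + (n : Fin M)) := by
      rw [hshift k (i + (n : Fin M)) (by omega)]
      simp
    have : 0 < (A ^ (1 + n)) (k, i + (n : Fin M) + 1) (k, i) := by
      refine powTrans A hA ?_ (ih k i h')
      rwa [pow_one]
    have hcast : ((n + 1 : ℕ) : Fin M) = (n : Fin M) + 1 := by push_cast; ring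
    rw [hcast, ← add_assoc, ← Nat.add_comm 1 n]
    exact this

lemma L1 (A : Matrix (Fin m × Fin M) (Fin m × Fin M) ℝ)
    (hA : ∀ p q, 0 ≤ A p q)
    (hshift : ∀ (k : Fin m) (i : Fin M), (i : ℕ) + 1 < M →
      ∀ p, A p (k, i) = if p = (k, i + 1) then 1 else 0)
    (hlast : ∀ k : Fin m,
      (∀ j : Fin m, 0 < A (j, (0 : Fin M)) (k, ((M - 1 : ℕ) : Fin M))) ∧
      (1 < M → 0 < A (k, (1 : Fin M)) (k, ((M - 1 : ℕ) : Fin M)))) :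
    ∀ (j k : Fin m) (i : Fin M), 0 < (A ^ M) (j, i) (k, i) := by
  intro j k i
  have hM : 0 < M := Nat.pos_of_ne_zero (NeZero.ne M)
  have hi : (i : ℕ) < M := i.isLt
  -- step 1: shift from (k,i) to (k, M-1) in M-1-i steps
  have e1 : i + ((M - 1 - (i : ℕ) : ℕ) : Fin M) = ((M - 1 : ℕ) : Fin M) := by
    apply Fin.ext
    rw [finValAddCast, Fin.val_natCast]
    congr 1
    omega
  have s1 : 0 < (A ^ (M - 1 - (i : ℕ))) (k, ((M - 1 : ℕ) : Fin M)) (k, i) := by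
    rw [← e1]
    exact shiftPos A hA hshift _ k i (by omega)
  -- step 2: one step from (k, M-1) to (j, 0)
  have s2 : 0 < (A ^ 1) (j, (0 : Fin M)) (k, ((M - 1 : ℕ) : Fin M)) := by
    rw [pow_one]; exact (hlast k).1 j
  -- step 3: shift from (j,0) to (j,i) in i steps
  have s3 : 0 < (A ^ (i : ℕ)) (j, i) (j, (0 : Fin M)) := by
    have := shiftPos A hA hshift (i : ℕ) j 0 (by simp [hi])
    simpa using this
  have := powTrans A hA s3 (powTrans A hA s2 s1)
  have hexp : (i : ℕ) + (1 + (M - 1 - (i : ℕ))) = M := by omega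
  rwa [hexp] at this

lemma L2 (A : Matrix (Fin m × Fin M) (Fin m × Fin M) ℝ)
    (hA : ∀ p q, 0 ≤ A p q)
    (hshift : ∀ (k : Fin m) (i : Fin M), (i : ℕ) + 1 < M →
      ∀ p, A p (k, i) = if p = (k, i + 1) then 1 else 0)
    (hlast : ∀ k : Fin m,
      (∀ j : Fin m, 0 < A (j, (0 : Fin M)) (k, ((M - 1 : ℕ) : Fin M))) ∧
      (1 < M → 0 < A (k, (1 : Fin M)) (k, ((M - 1 : ℕ) : Fin M)))) :
    ∀ (k : Fin m) (i : Fin M), 0 < (A ^ M) (k, i + 1) (k, i) := by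
  intro k i
  have hM : 0 < M := Nat.pos_of_ne_zero (NeZero.ne M)
  rcases eq_or_lt_of_le (Nat.one_le_iff_ne_zero.mpr (NeZero.ne M)) with hM1 | hM2
  · -- M = 1 : i + 1 = i
    have : i + 1 = i := by
      have hM1' : M = 1 := hM1.symm
      subst hM1'
      apply Subsingleton.elim
    rw [this]
    exact L1 A hA hshift hlast k k i
  · rcases lt_or_eq_of_le (Nat.le_sub_one_of_lt i.isLt) with hlt | heq
    · -- i < M - 1 : shift to M-1, exit to (k,1), shift i steps
      have e1 : i + ((M - 1 - (i : ℕ) : ℕ) : Fin M) = ((M - 1 : ℕ) : Fin M) := by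
        apply Fin.ext
        rw [finValAddCast, Fin.val_natCast]
        congr 1
        omega
      have s1 : 0 < (A ^ (M - 1 - (i : ℕ))) (k, ((M - 1 : ℕ) : Fin M)) (k, i) := by
        rw [← e1]
        exact shiftPos A hA hshift _ k i (by omega)
      have s2 : 0 < (A ^ 1) (k, (1 : Fin M)) (k, ((M - 1 : ℕ) : Fin M)) := by
        rw [pow_one]; exact (hlast k).2 hM2
      have h1v : ((1 : Fin M) : ℕ) = 1 := by
        rw [Fin.val_one', Nat.mod_eq_of_lt hM2]
      have s3 : 0 < (A ^ (i : ℕ)) (k, i + 1) (k, (1 : Fin M)) := by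
        have e3 : (1 : Fin M) + ((i : ℕ) : Fin M) = i + 1 := by
          rw [add_comm, Fin.cast_val_eq_self]
        have := shiftPos A hA hshift (i : ℕ) k 1 (by rw [h1v]; omega)
        rwa [e3] at this
      have := powTrans A hA s3 (powTrans A hA s2 s1)
      have hexp : (i : ℕ) + (1 + (M - 1 - (i : ℕ))) = M := by omega
      rwa [hexp] at this
    · -- i = M - 1 : exit to (k,1), shift M-2 steps to (k,M-1), exit to (k,0)
      have hi : i = ((M - 1 : ℕ) : Fin M) := by
        apply Fin.ext
        rw [Fin.val_natCast, Nat.mod_eq_of_lt (by omega)]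
        omega
      have s1 : 0 < (A ^ 1) (k, (1 : Fin M)) (k, i) := by
        rw [pow_one, hi]; exact (hlast k).2 hM2
      have h1v : ((1 : Fin M) : ℕ) = 1 := by
        rw [Fin.val_one', Nat.mod_eq_of_lt hM2]
      have e2 : (1 : Fin M) + ((M - 2 : ℕ) : Fin M) = ((M - 1 : ℕ) : Fin M) := by
        apply Fin.ext
        rw [finValAddCast, Fin.val_natCast]
        rw [h1v]
        congr 1
        omega
      have s2 : 0 < (A ^ (M - 2)) (k, ((M - 1 : ℕ) : Fin M)) (k, (1 : Fin M)) := by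
        rw [← e2]
        exact shiftPos A hA hshift _ k 1 (by rw [h1v]; omega)
      have s3 : 0 < (A ^ 1) (k, (0 : Fin M)) (k, ((M - 1 : ℕ) : Fin M)) := by
        rw [pow_one]; exact (hlast k).1 k
      have e4 : i + 1 = (0 : Fin M) := by
        apply Fin.ext
        rw [Fin.val_add, h1v, heq, show ((0 : Fin M) : ℕ) = 0 from rfl,
          Nat.sub_add_cancel hM, Nat.mod_self]
      have := powTrans A hA s3 (powTrans A hA s2 s1)
      have hexp : 1 + (M - 2 + 1) = M := by omega
      rw [hexp] at this
      rw [e4]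
      exact this

end StarMix

open StarMix


/-- Mixing of the transition matrix of the star map `f_λ` on `*_{mM}`.  Edges
are indexed by pairs `(k, i) ∈ Fin m × Fin M` (0-indexed fans of `M` tips).
`A` shifts the basis vector `e_{(k,i)}` to `e_{(k,i+1)}` for `i + 1 < M`, and
the support of `A·e_{(k,M-1)}` (the last tip of each fan) contains `e_{(j,0)}`
for every `j` and also `e_{(k,1)}`.  Then `A^{M²}` is entrywise positive, and
more precisely for each `(k,i)` and `r ≥ 1` the support of `A^{rM}·e_{(k,i)}`
contains every `e_{(j, i + t mod M)}` with `j ∈ Fin m` and `0 ≤ t ≤ r-1`. -/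
theorem star_transition_mixing (m M : ℕ) [NeZero m] [NeZero M]
    (A : Matrix (Fin m × Fin M) (Fin m × Fin M) ℝ)
    (hA : ∀ p q, 0 ≤ A p q)
    (hshift : ∀ (k : Fin m) (i : Fin M), (i : ℕ) + 1 < M →
      ∀ p, A p (k, i) = if p = (k, i + 1) then 1 else 0)
    (hlast : ∀ k : Fin m,
      (∀ j : Fin m, 0 < A (j, (0 : Fin M)) (k, ((M - 1 : ℕ) : Fin M))) ∧
      (1 < M → 0 < A (k, (1 : Fin M)) (k, ((M - 1 : ℕ) : Fin M)))) :
    (∀ p q, 0 < (A ^ (M * M)) p q) ∧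
    (∀ (k : Fin m) (i : Fin M) (r : ℕ), 1 ≤ r →
      ∀ (j : Fin m) (t : ℕ), t ≤ r - 1 →
        0 < (A ^ (r * M)) (j, i + (t : Fin M)) (k, i)) := by
  have hM : 0 < M := Nat.pos_of_ne_zero (NeZero.ne M)
  have key : ∀ (r : ℕ), 1 ≤ r → ∀ (k : Fin m) (i : Fin M) (j : Fin m) (t : ℕ), t ≤ r - 1 →
      0 < (A ^ (r * M)) (j, i + (t : Fin M)) (k, i) := by
    intro r hr
    induction r, hr using Nat.le_induction with
    | base =>
      intro k i j t ht
      interval_cases t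
      simpa using L1 A hA hshift hlast j k i
    | succ r hr ih =>
      intro k i j t ht
      have hsum : (r + 1) * M = r * M + M := by ring
      rw [hsum]
      rcases Nat.lt_or_ge t r with h1 | h2
      · -- t ≤ r - 1 : go through (j, i)
        exact powTrans A hA (ih j i j t (by omega)) (L1 A hA hshift hlast j k i)
      · -- t = r : go through (k, i + 1)
        have ht' : t = r := by omega
        have e : (i + 1) + ((t - 1 : ℕ) : Fin M) = i + (t : Fin M) := by
          have : ((t : ℕ) : Fin M) = ((t - 1 : ℕ) : Fin M) + 1 := by
            rw [show t = (t - 1) + 1 by omega]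
            push_cast
            ring
          rw [this]
          abel
        have h2' := ih (i := i + 1) (k := k) j (t - 1) (by omega)
        rw [e] at h2'
        exact powTrans A hA h2' (L2 A hA hshift hlast k i)
  constructor
  · intro p q
    obtain ⟨j, s⟩ := p
    obtain ⟨k, i⟩ := q
    set t : ℕ := (M + (s : ℕ) - (i : ℕ)) % M with htdef
    have htM : t < M := Nat.mod_lt _ hM
    have e : i + (t : Fin M) = s := by
      apply Fin.ext
      rw [finValAddCast]
      have h1 : ((i : ℕ) + t) % M = ((i : ℕ) + (M + (s : ℕ) - (i : ℕ))) % M := by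
        rw [htdef, Nat.add_mod, Nat.mod_mod_of_dvd _ dvd_rfl, ← Nat.add_mod]
      rw [h1, show (i : ℕ) + (M + (s : ℕ) - (i : ℕ)) = M + (s : ℕ) by omega,
        Nat.add_mod_left, Nat.mod_eq_of_lt s.isLt]
    have := key M (by omega) k i j t (by omega)
    rw [e] at this
    exact this
  · intro k i r hr j t ht
    exact key r hr k i j t ht
end
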